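/- Let m, d be positive integers, Σ ∈ Mat_{m×d}(ℝ), and let f(x) = B(x)∇H(x) with H(p,q) = ½|p|² + V(q), where (x,y) ↦ B(x)∇H(y) is globally Lipschitz with constant L and f is of class C² with first and second derivatives of at most polynomial growth. Then there exists a function C(x) of at most polynomial growth in |x| such that for every 0 < h with h·L ≤ 1/2 and every x ∈ ℝ^{2m}, the one-step map of the drift-preserving scheme started at x — Y₁ = x + (Σξ,0), Y₂ the unique solution of Y₂ = Y₁ + h B((Y₁+Y₂)/2)∫₀¹∇H(Y₁+θ(Y₂−Y₁))dθ, X₁ = Y₂ + (Ση,0), with ξ, η independent N(0,(h/2)Id_d) vectors — satisfies (E[‖X₁ − x − h f(x) − (Σ(ξ+η), 0) − h·Df(x)((Σξ, 0))‖²])^{1/2} ≤ C(x) h². (Local mean-square expansion of the drift-preserving scheme with remainder of order two, yielding mean-square convergence of order one via Milstein's fundamental theorem.) -/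

import Mathlib

open Matrix MeasureTheory ProbabilityTheory
open scoped RealInnerProductSpace

/-- An `ℝᵈ`-valued random vector is centered Gaussian with covariance `s·Id_d`
iff every linear functional `⟨t, ·⟩` of it is a real Gaussian `N(0, s‖t‖²)`. -/
def IsCenteredGaussianVec {Ω : Type*} [MeasurableSpace Ω] (μ : Measure Ω)
    (d : ℕ) (s : ℝ) (ξ : Ω → EuclideanSpace ℝ (Fin d)) : Prop :=
  Measurable ξ ∧ ∀ t : EuclideanSpace ℝ (Fin d),
    Measure.map (fun ω => ⟪t, ξ ω⟫) μ = gaussianReal 0 (Real.toNNReal (s * ‖t‖ ^ 2))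

/-- The vector `(v, 0) ∈ ℝᵐ × ℝᵐ ≅ ℝ^{2m}` whose first `m` components are `v`
and last `m` components vanish. -/
noncomputable def pad (m : ℕ) (v : EuclideanSpace ℝ (Fin m)) :
    EuclideanSpace ℝ (Fin (m + m)) :=
  (WithLp.equiv 2 (Fin (m + m) → ℝ)).symm
    (Fin.append (WithLp.equiv 2 (Fin m → ℝ) v) 0)

/-- The separable Hamiltonian `H(p,q) = ½ ∑ⱼ pⱼ² + V(q)` on `ℝᵐ × ℝᵐ ≅ ℝ^{2m}`. -/
noncomputable def Ham (m : ℕ) (V : EuclideanSpace ℝ (Fin m) → ℝ)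
    (x : EuclideanSpace ℝ (Fin (m + m))) : ℝ :=
  (1 / 2 : ℝ) * ∑ j : Fin m, x (Fin.castAdd m j) ^ 2
    + V ((WithLp.equiv 2 (Fin m → ℝ)).symm fun j => x (Fin.natAdd m j))

/-- The drift `f(x) = B(x) ∇H(x)` of the stochastic Poisson system. -/
noncomputable def drift (m : ℕ) (V : EuclideanSpace ℝ (Fin m) → ℝ)
    (B : EuclideanSpace ℝ (Fin (m + m)) → Matrix (Fin (m + m)) (Fin (m + m)) ℝ)
    (x : EuclideanSpace ℝ (Fin (m + m))) : EuclideanSpace ℝ (Fin (m + m)) :=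
  Matrix.toEuclideanLin (B x) (gradient (Ham m V) x)

/-! ### Auxiliary elementary lemmas -/

lemma sqrt_sq_add_sq_le {p q : ℝ} (hp : 0 ≤ p) (hq : 0 ≤ q) :
    Real.sqrt (p ^ 2 + q ^ 2) ≤ p + q := by
  rw [show p ^ 2 + q ^ 2 = (p + q) ^ 2 - 2 * (p * q) by ring]
  calc Real.sqrt ((p + q) ^ 2 - 2 * (p * q)) ≤ Real.sqrt ((p + q) ^ 2) := by
        apply Real.sqrt_le_sqrt; nlinarith
    _ = p + q := Real.sqrt_sq (by linarith)

lemma add_pow_le2 {a b : ℝ} (ha : 0 ≤ a) (hb : 0 ≤ b) (n : ℕ) :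
    (a + b) ^ n ≤ 2 ^ n * (a ^ n + b ^ n) := by
  rcases le_total a b with h | h
  · calc (a + b) ^ n ≤ (2 * b) ^ n := by
          apply pow_le_pow_left₀ (by linarith) (by linarith)
    _ = 2 ^ n * b ^ n := by rw [mul_pow]
    _ ≤ 2 ^ n * (a ^ n + b ^ n) := by
          have h1 : (0:ℝ) ≤ a ^ n := pow_nonneg ha n
          have h2 : (0:ℝ) < 2 ^ n := by positivity
          nlinarith
  · calc (a + b) ^ n ≤ (2 * a) ^ n := by
          apply pow_le_pow_left₀ (by linarith) (by linarith)
    _ = 2 ^ n * a ^ n := by rw [mul_pow]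
    _ ≤ 2 ^ n * (a ^ n + b ^ n) := by
          have h1 : (0:ℝ) ≤ b ^ n := pow_nonneg hb n
          have h2 : (0:ℝ) < 2 ^ n := by positivity
          nlinarith

/-! ### `pad` lemmas -/

lemma pad_add (m : ℕ) (v w : EuclideanSpace ℝ (Fin m)) :
    pad m (v + w) = pad m v + pad m w := by
  ext i
  simp only [pad, WithLp.equiv_symm_apply, PiLp.add_apply, WithLp.equiv_apply, PiLp.toLp_apply]
  induction i using Fin.addCases with
  | left i => simp [Fin.append_left, PiLp.add_apply]
  | right i =>
      simp only [Fin.append_right, Pi.zero_apply, add_zero]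

lemma pad_norm (m : ℕ) (v : EuclideanSpace ℝ (Fin m)) : ‖pad m v‖ = ‖v‖ := by
  rw [EuclideanSpace.norm_eq, EuclideanSpace.norm_eq]
  congr 1
  rw [Fin.sum_univ_add]
  have h1 : ∀ i : Fin m,
      ((WithLp.equiv 2 (Fin (m+m) → ℝ)).symm
        (Fin.append (WithLp.equiv 2 (Fin m → ℝ) v) 0) (Fin.castAdd m i)) = v i := by
    intro i
    simp only [WithLp.equiv_symm_apply, PiLp.toLp_apply, Fin.append_left, WithLp.equiv_apply]
  have h2 : ∀ i : Fin m,
      ((WithLp.equiv 2 (Fin (m+m) → ℝ)).symm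
        (Fin.append (WithLp.equiv 2 (Fin m → ℝ) v) 0) (Fin.natAdd m i)) = 0 := by
    intro i
    simp only [WithLp.equiv_symm_apply, PiLp.toLp_apply, Fin.append_right, Pi.zero_apply]
  simp only [pad, h1, h2]
  simp

/-! ### Smoothness of the Hamiltonian and continuity of its gradient -/

noncomputable def projQ (m : ℕ) :
    EuclideanSpace ℝ (Fin (m + m)) →L[ℝ] EuclideanSpace ℝ (Fin m) :=
  LinearMap.toContinuousLinearMap
  { toFun := fun x => (WithLp.equiv 2 (Fin m → ℝ)).symm fun j => x (Fin.natAdd m j)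
    map_add' := by intros; rfl
    map_smul' := by intros; rfl }

lemma ham_contDiff (m : ℕ) (V : EuclideanSpace ℝ (Fin m) → ℝ) (hV : ContDiff ℝ 1 V) :
    ContDiff ℝ 1 (Ham m V) := by
  have h1 : ContDiff ℝ 1 (fun x : EuclideanSpace ℝ (Fin (m+m)) =>
      (1 / 2 : ℝ) * ∑ j : Fin m, x (Fin.castAdd m j) ^ 2) := by
    apply ContDiff.mul contDiff_const
    apply ContDiff.sum
    intro j _
    have : ContDiff ℝ 1 (fun x : EuclideanSpace ℝ (Fin (m+m)) => x (Fin.castAdd m j)) := by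
      simpa [PiLp.proj_apply] using
        (EuclideanSpace.proj (𝕜 := ℝ) (Fin.castAdd m j)).contDiff (n := 1)
    exact this.pow 2
  have h2 : ContDiff ℝ 1 (fun x : EuclideanSpace ℝ (Fin (m+m)) =>
      V ((WithLp.equiv 2 (Fin m → ℝ)).symm fun j => x (Fin.natAdd m j))) := by
    have : (fun x : EuclideanSpace ℝ (Fin (m+m)) =>
        V ((WithLp.equiv 2 (Fin m → ℝ)).symm fun j => x (Fin.natAdd m j)))
        = V ∘ (projQ m) := rfl
    rw [this]
    exact hV.comp (projQ m).contDiff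
  exact h1.add h2

lemma gradient_ham_continuous (m : ℕ) (V : EuclideanSpace ℝ (Fin m) → ℝ)
    (hV : ContDiff ℝ 1 V) : Continuous (gradient (Ham m V)) := by
  have h := ham_contDiff m V hV
  have hc : Continuous (fderiv ℝ (Ham m V)) := h.continuous_fderiv one_ne_zero
  have : gradient (Ham m V) =
      fun x => (InnerProductSpace.toDual ℝ _).symm (fderiv ℝ (Ham m V) x) := rfl
  rw [this]
  exact (InnerProductSpace.toDual ℝ _).symm.continuous.comp hc

/-! ### Second-order Taylor estimate -/

lemma norm_fderiv_fderiv {E F : Type*} [NormedAddCommGroup E] [NormedSpace ℝ E]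
    [NormedAddCommGroup F] [NormedSpace ℝ F] (f : E → F) (z : E) :
    ‖fderiv ℝ (fderiv ℝ f) z‖ = ‖iteratedFDeriv ℝ 2 f z‖ := by
  rw [← norm_iteratedFDeriv_fderiv (n := 1)]
  rw [← norm_iteratedFDeriv_fderiv (n := 0), norm_iteratedFDeriv_zero]

lemma taylor_remainder {E F : Type*} [NormedAddCommGroup E] [NormedSpace ℝ E]
    [NormedAddCommGroup F] [NormedSpace ℝ F] {f : E → F} (hf : ContDiff ℝ 2 f)
    {K : ℝ} {k : ℕ} (hK : 0 ≤ K)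
    (hb : ∀ z, ‖iteratedFDeriv ℝ 2 f z‖ ≤ K * (1 + ‖z‖) ^ k) (x y : E) :
    ‖f y - f x - fderiv ℝ f x (y - x)‖ ≤ K * (1 + ‖x‖ + ‖y - x‖) ^ k * ‖y - x‖ ^ 2 := by
  set r : ℝ := ‖y - x‖ with hr
  have hr0 : 0 ≤ r := norm_nonneg _
  set M : ℝ := K * (1 + ‖x‖ + r) ^ k with hM
  have hM0 : 0 ≤ M := by positivity
  set s : Set E := Metric.closedBall x r with hs
  have hconv : Convex ℝ s := convex_closedBall x r
  have hd1 : ∀ z : E, DifferentiableAt ℝ f z := fun z =>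
    (hf.differentiable (by norm_num)).differentiableAt
  have hd2 : ∀ z : E, DifferentiableAt ℝ (fderiv ℝ f) z := fun z =>
    ((hf.fderiv_right (m := 1) (by norm_num)).differentiable (by norm_num)).differentiableAt
  have step1 : ∀ z ∈ s, ‖fderiv ℝ (fderiv ℝ f) z‖ ≤ M := by
    intro z hz
    rw [norm_fderiv_fderiv]
    refine (hb z).trans ?_
    rw [hM]
    apply mul_le_mul_of_nonneg_left _ hK
    apply pow_le_pow_left₀ (by positivity)
    have h1 : ‖z - x‖ ≤ r := by rwa [← dist_eq_norm, ← Metric.mem_closedBall]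
    have h2 : ‖z‖ ≤ ‖x‖ + r := by
      calc ‖z‖ = ‖x + (z - x)‖ := by rw [show x + (z - x) = z from by abel]
        _ ≤ ‖x‖ + ‖z - x‖ := norm_add_le _ _
        _ ≤ ‖x‖ + r := by linarith
    linarith
  have step2 : ∀ z ∈ s, ‖fderiv ℝ f z - fderiv ℝ f x‖ ≤ M * r := by
    intro z hz
    have hxs : x ∈ s := Metric.mem_closedBall_self hr0
    have := hconv.norm_image_sub_le_of_norm_fderiv_le
      (fun w _ => hd2 w) step1 hxs hz
    refine this.trans ?_
    apply mul_le_mul_of_nonneg_left _ hM0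
    rwa [← dist_eq_norm, ← Metric.mem_closedBall]
  set g : E → F := fun z => f z - fderiv ℝ f x z with hg
  have hgd : ∀ z : E, DifferentiableAt ℝ g z := fun z =>
    (hd1 z).sub ((fderiv ℝ f x).differentiableAt)
  have hgderiv : ∀ z : E, fderiv ℝ g z = fderiv ℝ f z - fderiv ℝ f x := by
    intro z
    rw [hg]
    rw [fderiv_fun_sub (hd1 z) ((fderiv ℝ f x).differentiableAt), (fderiv ℝ f x).fderiv]
  have step3 : ‖g y - g x‖ ≤ M * r * ‖y - x‖ := by
    apply hconv.norm_image_sub_le_of_norm_fderiv_le (fun w _ => hgd w)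
      (fun w hw => by rw [hgderiv]; exact step2 w hw)
      (Metric.mem_closedBall_self hr0)
    rw [Metric.mem_closedBall, dist_eq_norm]
  have hgyx : g y - g x = f y - f x - fderiv ℝ f x (y - x) := by
    rw [hg]; simp only [map_sub]; abel
  rw [← hgyx]
  calc ‖g y - g x‖ ≤ M * r * ‖y - x‖ := step3
    _ = K * (1 + ‖x‖ + r) ^ k * r ^ 2 := by rw [hM, ← hr]; ring

/-! ### Gaussian moments -/

noncomputable def gaussMoment (n : ℕ) : ℝ := ∫ x, x ^ (2 * n) ∂(gaussianReal 0 1)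

lemma gaussMoment_nonneg (n : ℕ) : 0 ≤ gaussMoment n :=
  integral_nonneg fun x => (even_two_mul n).pow_nonneg x

lemma pow_mul_exp_bound {b : ℝ} (hb : 0 < b) (n : ℕ) (x : ℝ) :
    x ^ (2 * n) ≤ (n.factorial * (2 / b) ^ n) * Real.exp (b / 2 * x ^ 2) := by
  have h := Real.pow_div_factorial_le_exp (x := b / 2 * x ^ 2) (by positivity) n
  have h2 : (b / 2 * x ^ 2) ^ n = (b / 2) ^ n * x ^ (2 * n) := by
    rw [mul_pow, ← pow_mul]
  rw [div_le_iff₀ (by positivity), h2] at h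
  have hpos : (0:ℝ) < (b / 2) ^ n := by positivity
  calc x ^ (2 * n) = ((b/2)^n * x^(2*n)) * ((b/2)^n)⁻¹ := by field_simp
    _ ≤ (Real.exp (b / 2 * x ^ 2) * n.factorial) * ((b/2)^n)⁻¹ := by
        apply mul_le_mul_of_nonneg_right h (by positivity)
    _ = (n.factorial * (2 / b) ^ n) * Real.exp (b / 2 * x ^ 2) := by
        rw [← inv_pow, inv_div]; ring

lemma integrable_pow_mul_exp_neg_mul_sq' {b : ℝ} (hb : 0 < b) (n : ℕ) :
    Integrable (fun x : ℝ => x ^ (2 * n) * Real.exp (-b * x ^ 2)) := by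
  have hint : Integrable (fun x : ℝ =>
      (n.factorial * (2 / b) ^ n) * Real.exp (-(b / 2) * x ^ 2)) :=
    (integrable_exp_neg_mul_sq (by positivity)).const_mul _
  refine hint.mono' ?_ ?_
  · apply Measurable.aestronglyMeasurable
    exact (measurable_id.pow_const _).mul ((measurable_id.pow_const _).const_mul (-b)).exp
  · filter_upwards with x
    rw [Real.norm_eq_abs, abs_mul, abs_of_nonneg (Real.exp_pos _).le,
      abs_of_nonneg ((even_two_mul n).pow_nonneg x)]
    calc x ^ (2*n) * Real.exp (-b * x^2)
        ≤ ((n.factorial * (2 / b) ^ n) * Real.exp (b / 2 * x ^ 2)) * Real.exp (-b * x^2) := by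
          apply mul_le_mul_of_nonneg_right (pow_mul_exp_bound hb n x) (Real.exp_pos _).le
      _ = (n.factorial * (2 / b) ^ n) * Real.exp (-(b/2) * x ^ 2) := by
          rw [mul_assoc, ← Real.exp_add]; ring_nf

open scoped NNReal in
lemma integrable_pow_gaussianReal (v : ℝ≥0) (n : ℕ) :
    Integrable (fun x : ℝ => x ^ (2 * n)) (gaussianReal 0 v) := by
  by_cases hv : v = 0
  · rw [hv, gaussianReal_zero_var]
    exact (integrable_const _).congr (ae_eq_dirac _).symm
  · rw [gaussianReal_of_var_ne_zero _ hv]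
    rw [integrable_withDensity_iff (measurable_gaussianPDF _ _)
      (Filter.Eventually.of_forall fun x => ENNReal.ofReal_lt_top)]
    have : (fun x : ℝ => x ^ (2*n) * (gaussianPDF 0 v x).toReal)
        = fun x => ((Real.sqrt (2 * Real.pi * v))⁻¹)
            * (x ^ (2*n) * Real.exp ((2 * (v:ℝ))⁻¹ * -1 * x ^ 2)) := by
      funext x
      rw [gaussianPDF, ENNReal.toReal_ofReal (gaussianPDFReal_nonneg _ _ _), gaussianPDFReal]
      ring_nf
    rw [this]
    apply Integrable.const_mul
    have hvpos : (0:ℝ) < (v:ℝ) := by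
      exact_mod_cast pos_iff_ne_zero.mpr hv
    have hb : (0:ℝ) < (2 * (v:ℝ))⁻¹ := by positivity
    have := integrable_pow_mul_exp_neg_mul_sq' hb n
    simpa [neg_mul, mul_comm] using this

open scoped NNReal in
lemma integral_pow_gaussianReal (v : ℝ≥0) (n : ℕ) :
    ∫ x, x ^ (2 * n) ∂(gaussianReal 0 v) = (v : ℝ) ^ n * gaussMoment n := by
  by_cases hv : v = 0
  · subst hv
    rw [gaussianReal_zero_var, integral_dirac]
    cases n with
    | zero => simp [gaussMoment]
    | succ n => simp [pow_succ, zero_pow, Nat.mul_succ]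
  · set c : ℝ := Real.sqrt v with hc
    have hc0 : 0 ≤ c := Real.sqrt_nonneg _
    have hmap : (gaussianReal 0 1).map (fun x => c * x) = gaussianReal 0 v := by
      have := gaussianReal_map_const_mul (μ := 0) (v := 1) c
      rw [mul_zero] at this
      convert this using 2
      ext
      simp [hc, Real.sq_sqrt (v.2)]
    calc ∫ x, x ^ (2*n) ∂(gaussianReal 0 v)
        = ∫ x, x ^ (2*n) ∂((gaussianReal 0 1).map (fun x => c * x)) := by rw [hmap]
      _ = ∫ x, (c * x) ^ (2*n) ∂(gaussianReal 0 1) := by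
          rw [integral_map (measurable_const_mul c).aemeasurable]
          exact (measurable_id.pow_const _).aestronglyMeasurable
      _ = c ^ (2*n) * ∫ x, x ^ (2*n) ∂(gaussianReal 0 1) := by
          simp_rw [mul_pow]; exact integral_const_mul _ _
      _ = (v : ℝ) ^ n * gaussMoment n := by
          have hcsq : c ^ 2 = (v:ℝ) := Real.sq_sqrt v.2
          rw [pow_mul, hcsq, gaussMoment]

lemma coord_law {Ω : Type*} [MeasurableSpace Ω] {μ : Measure Ω} {d : ℕ} {s : ℝ}
    {ξ : Ω → EuclideanSpace ℝ (Fin d)} (hξ : IsCenteredGaussianVec μ d s ξ) (i : Fin d) :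
    Measure.map (fun ω => ξ ω i) μ = gaussianReal 0 (Real.toNNReal s) := by
  have h := hξ.2 (EuclideanSpace.single i 1)
  have he : (fun ω => ⟪EuclideanSpace.single i (1:ℝ), ξ ω⟫) = fun ω => ξ ω i := by
    funext ω
    rw [EuclideanSpace.inner_single_left]
    simp
  have hn : ‖EuclideanSpace.single i (1:ℝ)‖ = 1 := by
    rw [EuclideanSpace.norm_single]; norm_num
  rw [he, hn] at h
  simpa using h

lemma coord_measurable {Ω : Type*} [MeasurableSpace Ω] {d : ℕ}
    {ξ : Ω → EuclideanSpace ℝ (Fin d)} (hm : Measurable ξ) (i : Fin d) :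
    Measurable (fun ω => ξ ω i) :=
  ((EuclideanSpace.proj (𝕜 := ℝ) i).continuous.measurable).comp hm

lemma coord_moment {Ω : Type*} [MeasurableSpace Ω] {μ : Measure Ω} {d : ℕ} {s : ℝ}
    {ξ : Ω → EuclideanSpace ℝ (Fin d)} (hξ : IsCenteredGaussianVec μ d s ξ) (hs : 0 ≤ s)
    (i : Fin d) (n : ℕ) :
    Integrable (fun ω => (ξ ω i) ^ (2*n)) μ ∧
      ∫ ω, (ξ ω i) ^ (2*n) ∂μ = s ^ n * gaussMoment n := by
  have hlaw := coord_law hξ i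
  have hmeas := coord_measurable hξ.1 i
  constructor
  · have h1 : Integrable (fun x : ℝ => x ^ (2*n)) (Measure.map (fun ω => ξ ω i) μ) := by
      rw [hlaw]; exact integrable_pow_gaussianReal _ _
    exact (integrable_map_measure (measurable_id.pow_const _).aestronglyMeasurable
      hmeas.aemeasurable).mp h1
  · calc ∫ ω, (ξ ω i) ^ (2*n) ∂μ
        = ∫ x, x ^ (2*n) ∂(Measure.map (fun ω => ξ ω i) μ) :=
          (integral_map hmeas.aemeasurable
            (measurable_id.pow_const _).aestronglyMeasurable).symm
      _ = (Real.toNNReal s : ℝ) ^ n * gaussMoment n := by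
          rw [hlaw, integral_pow_gaussianReal]
      _ = s ^ n * gaussMoment n := by rw [Real.coe_toNNReal _ hs]

lemma vec_moment {Ω : Type*} [MeasurableSpace Ω] {μ : Measure Ω} [IsProbabilityMeasure μ]
    {d : ℕ} (hd : 0 < d) {s : ℝ} (hs : 0 ≤ s) {ξ : Ω → EuclideanSpace ℝ (Fin d)}
    (hξ : IsCenteredGaussianVec μ d s ξ) (n : ℕ) :
    Integrable (fun ω => ‖ξ ω‖ ^ (2*(n+1))) μ ∧
      ∫ ω, ‖ξ ω‖ ^ (2*(n+1)) ∂μ ≤ (d:ℝ)^(n+1) * gaussMoment (n+1) * s^(n+1) := by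
  have hd0 : (0:ℝ) < (d:ℝ)^n := by positivity
  have hnormsq : ∀ ω, ‖ξ ω‖^2 = ∑ i, (ξ ω i)^2 := by
    intro ω
    rw [EuclideanSpace.norm_eq, Real.sq_sqrt (by positivity)]
    congr 1; funext i; rw [Real.norm_eq_abs, sq_abs]
  have hpoint : ∀ ω, ‖ξ ω‖^(2*(n+1)) ≤ (d:ℝ)^n * ∑ i, (ξ ω i)^(2*(n+1)) := by
    intro ω
    have h1 := pow_sum_div_card_le_sum_pow (s := Finset.univ)
      (f := fun i : Fin d => (ξ ω i)^2) (fun i _ => sq_nonneg _) n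
    rw [Finset.card_univ, Fintype.card_fin, div_le_iff₀ hd0] at h1
    calc ‖ξ ω‖^(2*(n+1)) = (‖ξ ω‖^2)^(n+1) := by rw [← pow_mul]
      _ = (∑ i, (ξ ω i)^2)^(n+1) := by rw [hnormsq]
      _ ≤ (∑ i, ((ξ ω i)^2)^(n+1)) * (d:ℝ)^n := h1
      _ = (d:ℝ)^n * ∑ i, (ξ ω i)^(2*(n+1)) := by
          rw [mul_comm]; congr 1
          exact Finset.sum_congr rfl fun i _ => by rw [← pow_mul]
  have hcoordInt : ∀ i : Fin d, Integrable (fun ω => (ξ ω i) ^ (2*(n+1))) μ :=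
    fun i => (coord_moment hξ hs i (n+1)).1
  have hbigInt : Integrable (fun ω => (d:ℝ)^n * ∑ i, (ξ ω i)^(2*(n+1))) μ :=
    (integrable_finset_sum Finset.univ fun i _ => hcoordInt i).const_mul _
  have hmeas : AEStronglyMeasurable (fun ω => ‖ξ ω‖ ^ (2*(n+1))) μ :=
    ((hξ.1.norm).pow_const _).aestronglyMeasurable
  have hInt : Integrable (fun ω => ‖ξ ω‖ ^ (2*(n+1))) μ := by
    refine hbigInt.mono' hmeas ?_
    filter_upwards with ω
    rw [Real.norm_eq_abs, abs_of_nonneg (by positivity)]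
    exact hpoint ω
  refine ⟨hInt, ?_⟩
  calc ∫ ω, ‖ξ ω‖ ^ (2*(n+1)) ∂μ
      ≤ ∫ ω, (d:ℝ)^n * ∑ i, (ξ ω i)^(2*(n+1)) ∂μ := by
        apply integral_mono_of_nonneg (Filter.Eventually.of_forall fun ω => by positivity)
          hbigInt (Filter.Eventually.of_forall hpoint)
    _ = (d:ℝ)^n * ∑ i, ∫ ω, (ξ ω i)^(2*(n+1)) ∂μ := by
        rw [integral_const_mul]
        congr 1
        exact integral_finset_sum Finset.univ fun i _ => hcoordInt i
    _ = (d:ℝ)^n * ∑ _i : Fin d, s^(n+1) * gaussMoment (n+1) := by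
        congr 1
        exact Finset.sum_congr rfl fun i _ => (coord_moment hξ hs i (n+1)).2
    _ = (d:ℝ)^(n+1) * gaussMoment (n+1) * s^(n+1) := by
        rw [Finset.sum_const, Finset.card_univ, Fintype.card_fin]
        push_cast
        ring

/-! ### The squared elementary bound -/

lemma bound_sq {h L F K₂ cx A : ℝ} {k₂ : ℕ} (hh : 0 ≤ h) (hL : 0 ≤ L) (hF : 0 ≤ F)
    (hK : 0 ≤ K₂) (hc : 0 ≤ cx) (hA : 0 ≤ A) :
    (h^2*(6*L*F + 12*L^2*A) + h*(K₂*(1+cx+A)^k₂*A^2))^2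
      ≤ 144*h^4*L^2*F^2 + 576*h^4*L^4*A^2
        + 2^(2*k₂+1)*K₂^2*h^2*((1+cx)^(2*k₂)*A^4 + A^(2*k₂+4)) := by
  set u : ℝ := h^2*(6*L*F + 12*L^2*A) with hu
  set v : ℝ := h*(K₂*(1+cx+A)^k₂*A^2) with hv
  have hu0 : 0 ≤ u := by positivity
  have hv0 : 0 ≤ v := by positivity
  have step1 : (u + v)^2 ≤ 2*u^2 + 2*v^2 := by nlinarith [sq_nonneg (u - v)]
  have step2 : 2*u^2 ≤ 144*h^4*L^2*F^2 + 576*h^4*L^4*A^2 := by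
    rw [hu]
    have h1 : (6*L*F + 12*L^2*A)^2 ≤ 72*L^2*F^2 + 288*L^4*A^2 := by
      nlinarith [sq_nonneg (6*L*F - 12*L^2*A)]
    have h4 : (0:ℝ) ≤ h^4 := by positivity
    nlinarith [mul_le_mul_of_nonneg_left h1 h4]
  have step3 : 2*v^2 ≤ 2^(2*k₂+1)*K₂^2*h^2*((1+cx)^(2*k₂)*A^4 + A^(2*k₂+4)) := by
    rw [hv]
    have hpow : ((1+cx+A)^k₂)^2 = (1+cx+A)^(2*k₂) := by
      rw [← pow_mul, mul_comm]
    have h2 : (1+cx+A)^(2*k₂) ≤ 2^(2*k₂) * ((1+cx)^(2*k₂) + A^(2*k₂)) :=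
      add_pow_le2 (by linarith) hA _
    have hexp : A^(2*k₂) * A^4 = A^(2*k₂+4) := by rw [← pow_add]
    have hA4 : (0:ℝ) ≤ A^4 := by positivity
    calc 2*(h*(K₂*(1+cx+A)^k₂*A^2))^2
        = 2*K₂^2*h^2*((1+cx+A)^(2*k₂)*A^4) := by rw [← hpow]; ring
      _ ≤ 2*K₂^2*h^2*((2^(2*k₂) * ((1+cx)^(2*k₂) + A^(2*k₂)))*A^4) := by
          apply mul_le_mul_of_nonneg_left _ (by positivity)
          exact mul_le_mul_of_nonneg_right h2 hA4
      _ = 2^(2*k₂+1)*K₂^2*h^2*((1+cx)^(2*k₂)*A^4 + A^(2*k₂)*A^4) := by ring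
      _ = 2^(2*k₂+1)*K₂^2*h^2*((1+cx)^(2*k₂)*A^4 + A^(2*k₂+4)) := by rw [hexp]
  calc (u+v)^2 ≤ 2*u^2 + 2*v^2 := step1
    _ ≤ _ := by linarith

/-! ### Pointwise estimates -/

section Pointwise

variable {m : ℕ} {V : EuclideanSpace ℝ (Fin m) → ℝ}
  {B : EuclideanSpace ℝ (Fin (m + m)) → Matrix (Fin (m + m)) (Fin (m + m)) ℝ}

set_option maxHeartbeats 1000000 in
/-- Key deterministic estimate for one realization. -/
lemma pointwise_key {L h K₂ : ℝ} {k₂ : ℕ}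
    (hLip : ∀ x y x' y' : EuclideanSpace ℝ (Fin (m + m)),
      ‖Matrix.toEuclideanLin (B x) (gradient (Ham m V) y)
          - Matrix.toEuclideanLin (B x') (gradient (Ham m V) y')‖
        ≤ L * Real.sqrt (‖x - x'‖ ^ 2 + ‖y - y'‖ ^ 2))
    (hL : 0 ≤ L) (hh : 0 < h) (hhL : h * L ≤ 1 / 2)
    (hgc : Continuous (gradient (Ham m V)))
    (hK₂ : 0 ≤ K₂)
    (hT : ∀ x y : EuclideanSpace ℝ (Fin (m + m)),
      ‖drift m V B y - drift m V B x - fderiv ℝ (drift m V B) x (y - x)‖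
        ≤ K₂ * (1 + ‖x‖ + ‖y - x‖) ^ k₂ * ‖y - x‖ ^ 2)
    (x a Y : EuclideanSpace ℝ (Fin (m + m)))
    (heq : Y = (x + a)
      + h • (Matrix.toEuclideanLin (B ((2:ℝ)⁻¹ • ((x + a) + Y))))
          (∫ θ in (0:ℝ)..1, gradient (Ham m V) ((x + a) + θ • (Y - (x + a))))) :
    ‖Y - (x + a) - h • drift m V B x - h • (fderiv ℝ (drift m V B) x) a‖
      ≤ h ^ 2 * (6 * L * ‖drift m V B x‖ + 12 * L ^ 2 * ‖a‖)
        + h * (K₂ * (1 + ‖x‖ + ‖a‖) ^ k₂ * ‖a‖ ^ 2) := by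
  set f : EuclideanSpace ℝ (Fin (m + m)) → EuclideanSpace ℝ (Fin (m + m)) := drift m V B with hf
  set Y₁ : EuclideanSpace ℝ (Fin (m + m)) := x + a with hY₁
  set mid : EuclideanSpace ℝ (Fin (m + m)) := (2:ℝ)⁻¹ • (Y₁ + Y) with hmid
  set Δ : EuclideanSpace ℝ (Fin (m + m)) := Y - Y₁ with hΔ
  set P : ℝ → EuclideanSpace ℝ (Fin (m + m)) := fun θ => gradient (Ham m V) (Y₁ + θ • Δ) with hP
  set T : EuclideanSpace ℝ (Fin (m + m)) →L[ℝ] EuclideanSpace ℝ (Fin (m + m)) := LinearMap.toContinuousLinearMap (Matrix.toEuclideanLin (B mid)) with hTd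
  set u : EuclideanSpace ℝ (Fin (m + m)) := ∫ θ in (0:ℝ)..1, P θ with hu
  set g : EuclideanSpace ℝ (Fin (m + m)) := T u with hg
  -- Y decomposition
  have hYg : Y - Y₁ = h • g := by
    conv_lhs => rw [heq]
    rw [hg, hu, hP, hTd]
    simp only [LinearMap.coe_toContinuousLinearMap']
    abel
  -- continuity and integrability of the path gradient
  have hPcont : Continuous P := by
    apply hgc.comp
    exact continuous_const.add (continuous_id.smul continuous_const)
  have hPint : IntervalIntegrable P MeasureTheory.volume 0 1 := hPcont.intervalIntegrable _ _
  have hTPint : IntervalIntegrable (fun θ => T (P θ)) MeasureTheory.volume 0 1 :=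
    (T.continuous.comp hPcont).intervalIntegrable _ _
  -- mid - Y₁ = (1/2) Δ
  have hmid1 : mid - Y₁ = (2:ℝ)⁻¹ • Δ := by
    rw [hmid, hΔ]
    have : Y = Y₁ + (Y - Y₁) := by abel
    rw [this]
    module
  -- Claim 1 : ‖g - f Y₁‖ ≤ (3/2) L ‖Δ‖
  have claim1 : ‖g - f Y₁‖ ≤ 3/2 * L * ‖Δ‖ := by
    have hTu : g = ∫ θ in (0:ℝ)..1, T (P θ) := by
      rw [hg, hu, T.intervalIntegral_comp_comm hPint]
    have hfY₁ : f Y₁ = ∫ _θ in (0:ℝ)..1, f Y₁ := by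
      rw [intervalIntegral.integral_const, sub_zero, one_smul]
    have hsub : g - f Y₁ = ∫ θ in (0:ℝ)..1, (T (P θ) - f Y₁) := by
      rw [hTu]
      conv_lhs => rw [hfY₁]
      rw [intervalIntegral.integral_sub hTPint (intervalIntegrable_const)]
    rw [hsub]
    have hbd : ∀ θ ∈ Set.uIoc (0:ℝ) 1, ‖T (P θ) - f Y₁‖ ≤ 3/2 * L * ‖Δ‖ := by
      intro θ hθ
      rw [Set.uIoc_of_le (by norm_num : (0:ℝ) ≤ 1)] at hθ
      obtain ⟨hθ0, hθ1⟩ := hθ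
      have hTP : T (P θ) = Matrix.toEuclideanLin (B mid) (gradient (Ham m V) (Y₁ + θ • Δ)) := by
        rw [hTd, hP]; simp only [LinearMap.coe_toContinuousLinearMap']
      have hfY : f Y₁ = Matrix.toEuclideanLin (B Y₁) (gradient (Ham m V) Y₁) := rfl
      rw [hTP, hfY]
      have := hLip mid (Y₁ + θ • Δ) Y₁ Y₁
      have hsimp : Y₁ + θ • Δ - Y₁ = θ • Δ := by abel
      rw [hsimp, hmid1] at this
      refine this.trans ?_
      have h1 : ‖(2:ℝ)⁻¹ • Δ‖ = 2⁻¹ * ‖Δ‖ := by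
        rw [norm_smul, Real.norm_eq_abs]; norm_num
      have h2 : ‖θ • Δ‖ = θ * ‖Δ‖ := by
        rw [norm_smul, Real.norm_eq_abs, abs_of_pos hθ0]
      have hsq : Real.sqrt (‖(2:ℝ)⁻¹ • Δ‖ ^ 2 + ‖θ • Δ‖ ^ 2)
          ≤ 2⁻¹ * ‖Δ‖ + θ * ‖Δ‖ := by
        rw [h1, h2] at *
        exact sqrt_sq_add_sq_le (by positivity) (by positivity)
      calc L * Real.sqrt (‖(2:ℝ)⁻¹ • Δ‖ ^ 2 + ‖θ • Δ‖ ^ 2)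
          ≤ L * (2⁻¹ * ‖Δ‖ + θ * ‖Δ‖) := mul_le_mul_of_nonneg_left hsq hL
        _ ≤ L * (2⁻¹ * ‖Δ‖ + 1 * ‖Δ‖) := by
            apply mul_le_mul_of_nonneg_left _ hL
            have := norm_nonneg Δ
            nlinarith
        _ = 3/2 * L * ‖Δ‖ := by ring
    have := intervalIntegral.norm_integral_le_of_norm_le_const hbd
    simpa using this
  -- ‖Δ‖ = h ‖g‖
  have hΔnorm : ‖Δ‖ = h * ‖g‖ := by
    rw [hΔ, hYg, norm_smul, Real.norm_eq_abs, abs_of_pos hh]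
  -- Claim 2 : ‖g‖ ≤ 4 ‖f Y₁‖
  have claim2 : ‖g‖ ≤ 4 * ‖f Y₁‖ := by
    have h1 : ‖g‖ ≤ ‖f Y₁‖ + ‖g - f Y₁‖ := by
      have := norm_add_le (f Y₁) (g - f Y₁)
      simpa using this
    have h2 : 3/2 * L * ‖Δ‖ = 3/2 * (h * L) * ‖g‖ := by rw [hΔnorm]; ring
    have h3 : 3/2 * (h * L) * ‖g‖ ≤ 3/4 * ‖g‖ := by
      have := norm_nonneg g
      nlinarith
    have := claim1
    linarith [norm_nonneg g, norm_nonneg (f Y₁)]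
  -- Claim 3 : ‖f Y₁‖ ≤ ‖f x‖ + 2 L ‖a‖
  have claim3 : ‖f Y₁‖ ≤ ‖f x‖ + 2 * L * ‖a‖ := by
    have h1 := hLip Y₁ Y₁ x x
    have h2 : Y₁ - x = a := by rw [hY₁]; abel
    rw [h2] at h1
    have h3 : Real.sqrt (‖a‖ ^ 2 + ‖a‖ ^ 2) ≤ ‖a‖ + ‖a‖ :=
      sqrt_sq_add_sq_le (norm_nonneg _) (norm_nonneg _)
    have h4 : ‖f Y₁ - f x‖ ≤ 2 * L * ‖a‖ := by
      have : ‖f Y₁ - f x‖ ≤ L * Real.sqrt (‖a‖ ^ 2 + ‖a‖ ^ 2) := h1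
      refine this.trans ?_
      calc L * Real.sqrt (‖a‖ ^ 2 + ‖a‖ ^ 2) ≤ L * (‖a‖ + ‖a‖) :=
            mul_le_mul_of_nonneg_left h3 hL
        _ = 2 * L * ‖a‖ := by ring
    calc ‖f Y₁‖ = ‖f x + (f Y₁ - f x)‖ := by rw [show f x + (f Y₁ - f x) = f Y₁ from by abel]
      _ ≤ ‖f x‖ + ‖f Y₁ - f x‖ := norm_add_le _ _
      _ ≤ ‖f x‖ + 2 * L * ‖a‖ := by linarith
  -- Taylor term
  have htaylor : ‖f Y₁ - f x - fderiv ℝ f x a‖ ≤ K₂ * (1 + ‖x‖ + ‖a‖) ^ k₂ * ‖a‖ ^ 2 := by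
    have := hT x Y₁
    have h2 : Y₁ - x = a := by rw [hY₁]; abel
    rw [h2] at this
    exact this
  -- assemble
  have hdecomp : Y - Y₁ - h • f x - h • (fderiv ℝ f x) a
      = h • ((g - f Y₁) + (f Y₁ - f x - fderiv ℝ f x a)) := by
    rw [hYg]
    rw [smul_add, smul_sub, smul_sub, smul_sub]
    abel
  rw [hdecomp, norm_smul, Real.norm_eq_abs, abs_of_pos hh]
  have hfinal : ‖(g - f Y₁) + (f Y₁ - f x - fderiv ℝ f x a)‖
      ≤ (6 * L * h * ‖f x‖ + 12 * L^2 * h * ‖a‖) + K₂ * (1 + ‖x‖ + ‖a‖) ^ k₂ * ‖a‖ ^ 2 := by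
    refine (norm_add_le _ _).trans ?_
    have hgf : ‖g - f Y₁‖ ≤ 6 * L * h * ‖f x‖ + 12 * L^2 * h * ‖a‖ := by
      have h1 : ‖g - f Y₁‖ ≤ 3/2 * L * (h * (4 * ‖f Y₁‖)) := by
        rw [hΔnorm] at claim1
        refine claim1.trans ?_
        have : L * h * ‖g‖ ≤ L * h * (4 * ‖f Y₁‖) :=
          mul_le_mul_of_nonneg_left claim2 (by positivity)
        nlinarith
      refine h1.trans ?_
      have h6 : (0:ℝ) ≤ 6 * L * h := by positivity
      have h7 := mul_le_mul_of_nonneg_left claim3 h6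
      nlinarith [h7]
    linarith [htaylor]
  calc h * ‖(g - f Y₁) + (f Y₁ - f x - fderiv ℝ f x a)‖
      ≤ h * ((6 * L * h * ‖f x‖ + 12 * L^2 * h * ‖a‖)
          + K₂ * (1 + ‖x‖ + ‖a‖) ^ k₂ * ‖a‖ ^ 2) :=
        mul_le_mul_of_nonneg_left hfinal hh.le
    _ = h ^ 2 * (6 * L * ‖f x‖ + 12 * L ^ 2 * ‖a‖)
        + h * (K₂ * (1 + ‖x‖ + ‖a‖) ^ k₂ * ‖a‖ ^ 2) := by ring

end Pointwise

set_option maxHeartbeats 1000000 in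
lemma pointwise_zero {m : ℕ} {V : EuclideanSpace ℝ (Fin m) → ℝ}
    {B : EuclideanSpace ℝ (Fin (m + m)) → Matrix (Fin (m + m)) (Fin (m + m)) ℝ} {h : ℝ}
    (hconst : ∀ x y x' y' : EuclideanSpace ℝ (Fin (m + m)),
      Matrix.toEuclideanLin (B x) (gradient (Ham m V) y)
        = Matrix.toEuclideanLin (B x') (gradient (Ham m V) y'))
    (hgc : Continuous (gradient (Ham m V)))
    (x a Y : EuclideanSpace ℝ (Fin (m + m)))
    (heq : Y = (x + a)
      + h • (Matrix.toEuclideanLin (B ((2:ℝ)⁻¹ • ((x + a) + Y))))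
          (∫ θ in (0:ℝ)..1, gradient (Ham m V) ((x + a) + θ • (Y - (x + a))))) :
    Y - (x + a) - h • drift m V B x - h • (fderiv ℝ (drift m V B) x) a = 0 := by
  set Y₁ : EuclideanSpace ℝ (Fin (m + m)) := x + a with hY₁
  set mid : EuclideanSpace ℝ (Fin (m + m)) := (2:ℝ)⁻¹ • (Y₁ + Y) with hmid
  set Δ : EuclideanSpace ℝ (Fin (m + m)) := Y - Y₁ with hΔ
  set P : ℝ → EuclideanSpace ℝ (Fin (m + m)) :=
    fun θ => gradient (Ham m V) (Y₁ + θ • Δ) with hP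
  set T : EuclideanSpace ℝ (Fin (m + m)) →L[ℝ] EuclideanSpace ℝ (Fin (m + m)) :=
    LinearMap.toContinuousLinearMap (Matrix.toEuclideanLin (B mid)) with hTd
  set u : EuclideanSpace ℝ (Fin (m + m)) := ∫ θ in (0:ℝ)..1, P θ with hu
  have hfconst : drift m V B = fun _ => drift m V B x := by
    funext z
    exact hconst z z x x
  have hD : fderiv ℝ (drift m V B) x = 0 := by
    rw [hfconst]
    exact fderiv_const_apply _
  have hPcont : Continuous P := by
    apply hgc.comp
    exact continuous_const.add (continuous_id.smul continuous_const)
  have hPint : IntervalIntegrable P MeasureTheory.volume 0 1 := hPcont.intervalIntegrable _ _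
  have hTu : T u = ∫ θ in (0:ℝ)..1, T (P θ) := by
    rw [hu, T.intervalIntegral_comp_comm hPint]
  have hTP : ∀ θ : ℝ, T (P θ) = drift m V B x := by
    intro θ
    rw [hTd, hP]
    simp only [LinearMap.coe_toContinuousLinearMap']
    exact hconst mid (Y₁ + θ • Δ) x x
  have hTu2 : T u = drift m V B x := by
    rw [hTu]
    rw [intervalIntegral.integral_congr (g := fun _ => drift m V B x)
      (fun θ _ => hTP θ)]
    rw [intervalIntegral.integral_const, sub_zero, one_smul]
  have hYg : Y - Y₁ = h • T u := by
    conv_lhs => rw [heq]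
    rw [hu, hP, hTd]
    simp only [LinearMap.coe_toContinuousLinearMap']
    abel
  rw [hΔ, hYg, hTu2, hD]
  simp


set_option maxHeartbeats 4000000 in
/-- **local mean-square expansion with order-two remainder.**
There is a function `C(x)` of at most polynomial growth such that for all `h` with
`h·L ≤ 1/2`, the one-step map of the drift-preserving scheme started at `x` satisfies
`(E[‖X₁ − x − h f(x) − (Σ(ξ+η),0) − h Df(x)(Σξ,0)‖²])^{1/2} ≤ C(x) h²`. -/
theorem drift_preserving_one_step_mean_square_expansion
    (m d : ℕ) (hm : 0 < m) (hd : 0 < d)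
    (Sig : Matrix (Fin m) (Fin d) ℝ)
    (B : EuclideanSpace ℝ (Fin (m + m)) → Matrix (Fin (m + m)) (Fin (m + m)) ℝ)
    (V : EuclideanSpace ℝ (Fin m) → ℝ) (hV : ContDiff ℝ 1 V)
    (L : ℝ)
    (hLip : ∀ x y x' y' : EuclideanSpace ℝ (Fin (m + m)),
      ‖Matrix.toEuclideanLin (B x) (gradient (Ham m V) y)
          - Matrix.toEuclideanLin (B x') (gradient (Ham m V) y')‖
        ≤ L * Real.sqrt (‖x - x'‖ ^ 2 + ‖y - y'‖ ^ 2))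
    (hf : ContDiff ℝ 2 (drift m V B))
    (hf1 : ∃ (K : ℝ) (k : ℕ), ∀ x,
      ‖iteratedFDeriv ℝ 1 (drift m V B) x‖ ≤ K * (1 + ‖x‖) ^ k)
    (hf2 : ∃ (K : ℝ) (k : ℕ), ∀ x,
      ‖iteratedFDeriv ℝ 2 (drift m V B) x‖ ≤ K * (1 + ‖x‖) ^ k) :
    ∃ (C : EuclideanSpace ℝ (Fin (m + m)) → ℝ) (K : ℝ) (k : ℕ),
      (∀ x, |C x| ≤ K * (1 + ‖x‖) ^ k) ∧
      ∀ h : ℝ, 0 < h → h * L ≤ 1 / 2 →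
      ∀ x : EuclideanSpace ℝ (Fin (m + m)),
      ∀ (Ω : Type) (_ : MeasurableSpace Ω) (μ : Measure Ω), IsProbabilityMeasure μ →
      ∀ ξ η : Ω → EuclideanSpace ℝ (Fin d),
        IsCenteredGaussianVec μ d (h / 2) ξ →
        IsCenteredGaussianVec μ d (h / 2) η →
        IndepFun ξ η μ →
      ∀ Y₂ : Ω → EuclideanSpace ℝ (Fin (m + m)), Measurable Y₂ →
        (∀ᵐ ω ∂μ,
          Y₂ ω = (x + pad m (Matrix.toEuclideanLin Sig (ξ ω)))
            + h • (Matrix.toEuclideanLin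
                (B ((2 : ℝ)⁻¹ • ((x + pad m (Matrix.toEuclideanLin Sig (ξ ω))) + Y₂ ω))))
              (∫ θ in (0 : ℝ)..1, gradient (Ham m V)
                ((x + pad m (Matrix.toEuclideanLin Sig (ξ ω)))
                  + θ • (Y₂ ω - (x + pad m (Matrix.toEuclideanLin Sig (ξ ω))))))) →
        Real.sqrt (∫ ω,
            ‖(Y₂ ω + pad m (Matrix.toEuclideanLin Sig (η ω)))
                - x - h • drift m V B x
                - pad m (Matrix.toEuclideanLin Sig (ξ ω + η ω))
                - h • (fderiv ℝ (drift m V B) x) (pad m (Matrix.toEuclideanLin Sig (ξ ω)))‖ ^ 2 ∂μ)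
          ≤ C x * h ^ 2 := by
  classical
  have hgc : Continuous (gradient (Ham m V)) := gradient_ham_continuous m V hV
  -- L is nonnegative
  have hL0 : 0 ≤ L := by
    by_contra hneg
    push_neg at hneg
    set p : EuclideanSpace ℝ (Fin (m+m)) :=
      EuclideanSpace.single (⟨0, by omega⟩ : Fin (m+m)) (1:ℝ) with hp
    have h1 := hLip p 0 0 0
    have h2 : ‖p - (0:EuclideanSpace ℝ (Fin (m+m)))‖ = 1 := by
      rw [sub_zero, hp, EuclideanSpace.norm_single]; norm_num
    have h3 : ‖(0:EuclideanSpace ℝ (Fin (m+m))) - 0‖ = 0 := by simp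
    rw [h2, h3] at h1
    have h4 : Real.sqrt ((1:ℝ)^2 + 0^2) = 1 := by norm_num
    rw [h4, mul_one] at h1
    have := norm_nonneg (Matrix.toEuclideanLin (B p) (gradient (Ham m V) 0)
      - Matrix.toEuclideanLin (B 0) (gradient (Ham m V) 0))
    linarith
  rcases eq_or_lt_of_le hL0 with hLz | hLpos
  · -- Degenerate case L = 0 : the scheme is exact.
    refine ⟨fun _ => 0, 0, 0, ?_, ?_⟩
    · intro x; simp
    · intro h hh hhL x Ω mΩ μ hμ ξ η hξ hη hind Y₂ hY₂m heqae
      have hconst : ∀ x y x' y' : EuclideanSpace ℝ (Fin (m + m)),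
          Matrix.toEuclideanLin (B x) (gradient (Ham m V) y)
            = Matrix.toEuclideanLin (B x') (gradient (Ham m V) y') := by
        intro x1 y1 x2 y2
        have h1 := hLip x1 y1 x2 y2
        rw [← hLz, zero_mul] at h1
        exact sub_eq_zero.mp (norm_le_zero_iff.mp h1)
      have hzero : ∫ ω,
          ‖(Y₂ ω + pad m (Matrix.toEuclideanLin Sig (η ω)))
              - x - h • drift m V B x
              - pad m (Matrix.toEuclideanLin Sig (ξ ω + η ω))
              - h • (fderiv ℝ (drift m V B) x)
                  (pad m (Matrix.toEuclideanLin Sig (ξ ω)))‖ ^ 2 ∂μ = 0 := by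
        rw [integral_congr_ae (g := fun _ => (0:ℝ))]
        · simp
        · filter_upwards [heqae] with ω hω
          have hkey := pointwise_zero hconst hgc x
            (pad m (Matrix.toEuclideanLin Sig (ξ ω))) (Y₂ ω) hω
          have hRrw : (Y₂ ω + pad m (Matrix.toEuclideanLin Sig (η ω)))
              - x - h • drift m V B x
              - pad m (Matrix.toEuclideanLin Sig (ξ ω + η ω))
              - h • (fderiv ℝ (drift m V B) x) (pad m (Matrix.toEuclideanLin Sig (ξ ω)))
              = Y₂ ω - (x + pad m (Matrix.toEuclideanLin Sig (ξ ω))) - h • drift m V B x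
                - h • (fderiv ℝ (drift m V B) x)
                    (pad m (Matrix.toEuclideanLin Sig (ξ ω))) := by
            rw [map_add, pad_add]
            abel
          rw [hRrw, hkey]
          simp
      rw [hzero]
      simp
  · -- Main case 0 < L.
    obtain ⟨K₂, k₂, hb⟩ := hf2
    have hK₂0 : 0 ≤ K₂ := by
      have h1 := (norm_nonneg (iteratedFDeriv ℝ 2 (drift m V B) 0)).trans (hb 0)
      simpa using h1
    have hT : ∀ x y : EuclideanSpace ℝ (Fin (m + m)),
        ‖drift m V B y - drift m V B x - fderiv ℝ (drift m V B) x (y - x)‖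
          ≤ K₂ * (1 + ‖x‖ + ‖y - x‖) ^ k₂ * ‖y - x‖ ^ 2 :=
      fun x y => taylor_remainder hf hK₂0 hb x y
    set S : ℝ := ‖LinearMap.toContinuousLinearMap (Matrix.toEuclideanLin Sig)‖ with hSdef
    have hS0 : 0 ≤ S := norm_nonneg _
    set F0 : ℝ := ‖drift m V B 0‖ with hF0def
    have hF00 : 0 ≤ F0 := norm_nonneg _
    set h₀ : ℝ := 1/(2*L) with hh₀def
    have hh₀0 : 0 ≤ h₀ := le_of_lt (by rw [hh₀def]; positivity)
    set W : ℝ := 2^(2*k₂+1)*K₂^2 with hWdef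
    have hW0 : 0 ≤ W := by rw [hWdef]; positivity
    set e : ℝ := (max 1 h₀)^k₂ with hedef
    have he0 : 0 ≤ e := by
      rw [hedef]; exact pow_nonneg (le_trans zero_le_one (le_max_left _ _)) _
    set D1 : ℝ := (d:ℝ)^(0+1) * gaussMoment (0+1) with hD1def
    set D2 : ℝ := (d:ℝ)^(1+1) * gaussMoment (1+1) with hD2def
    set D3 : ℝ := (d:ℝ)^(k₂+1+1) * gaussMoment (k₂+1+1) with hD3def
    have hD10 : 0 ≤ D1 := by
      rw [hD1def]; exact mul_nonneg (by positivity) (gaussMoment_nonneg _)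
    have hD20 : 0 ≤ D2 := by
      rw [hD2def]; exact mul_nonneg (by positivity) (gaussMoment_nonneg _)
    have hD30 : 0 ≤ D3 := by
      rw [hD3def]; exact mul_nonneg (by positivity) (gaussMoment_nonneg _)
    set X1 : ℝ := 144*L^2*(F0+2*L)^2 with hX1def
    set X2 : ℝ := 576*L^4*S^2*D1*h₀ with hX2def
    set X3 : ℝ := W*S^4*D2/4 with hX3def
    set X4 : ℝ := W*S^(2*k₂+4)*D3*e/4 with hX4def
    have hX10 : 0 ≤ X1 := by rw [hX1def]; positivity
    have hX20 : 0 ≤ X2 := by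
      rw [hX2def]
      exact mul_nonneg (mul_nonneg (by positivity) hD10) hh₀0
    have hX30 : 0 ≤ X3 := by
      rw [hX3def]
      exact div_nonneg (mul_nonneg (mul_nonneg hW0 (by positivity)) hD20) (by norm_num)
    have hX40 : 0 ≤ X4 := by
      rw [hX4def]
      exact div_nonneg
        (mul_nonneg (mul_nonneg (mul_nonneg hW0 (pow_nonneg hS0 _)) hD30) he0) (by norm_num)
    set Q : ℝ := X1 + X2 + X3 + X4 with hQdef
    have hQ0 : 0 ≤ Q := by rw [hQdef]; linarith
    set k : ℕ := max 1 k₂ with hkdef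
    refine ⟨fun z => Real.sqrt Q * (1 + ‖z‖)^k, Real.sqrt Q, k, ?_, ?_⟩
    · intro z
      rw [abs_of_nonneg (by positivity)]
    · intro h hh hhL x Ω mΩ μ hμ ξ η hξ hη hind Y₂ hY₂m heqae
      have hs0 : (0:ℝ) ≤ h/2 := by linarith
      have hhh₀ : h ≤ h₀ := by
        rw [hh₀def, le_div_iff₀ (by linarith)]
        linarith
      have hh2h₀ : h/2 ≤ h₀ := by linarith
      -- moment bounds
      have hm1 := vec_moment (μ := μ) hd hs0 hξ 0
      have hm2 := vec_moment (μ := μ) hd hs0 hξ 1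
      have hm3 := vec_moment (μ := μ) hd hs0 hξ (k₂+1)
      -- bound on ‖pad (Sig ξ)‖
      have haS : ∀ v : EuclideanSpace ℝ (Fin d),
          ‖pad m (Matrix.toEuclideanLin Sig v)‖ ≤ S * ‖v‖ := by
        intro v
        rw [pad_norm]
        have h1 : Matrix.toEuclideanLin Sig v
            = (LinearMap.toContinuousLinearMap (Matrix.toEuclideanLin Sig)) v := by
          simp
        rw [h1, hSdef]
        exact (LinearMap.toContinuousLinearMap (Matrix.toEuclideanLin Sig)).le_opNorm v
      -- the drift at x has linearly-growing norm
      have hFle : ‖drift m V B x‖ ≤ (F0 + 2*L) * (1 + ‖x‖) := by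
        have h1 := hLip x x 0 0
        have h2 : Real.sqrt (‖x - 0‖^2 + ‖x - 0‖^2) ≤ ‖x‖ + ‖x‖ := by
          rw [sub_zero]
          exact sqrt_sq_add_sq_le (norm_nonneg _) (norm_nonneg _)
        have h3 : ‖drift m V B x - drift m V B 0‖ ≤ L * (‖x‖ + ‖x‖) := by
          refine h1.trans ?_
          exact mul_le_mul_of_nonneg_left h2 hL0
        have h4 : ‖drift m V B x‖ ≤ F0 + L * (‖x‖ + ‖x‖) := by
          calc ‖drift m V B x‖
              = ‖drift m V B 0 + (drift m V B x - drift m V B 0)‖ := by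
                rw [show drift m V B 0 + (drift m V B x - drift m V B 0)
                  = drift m V B x from by abel]
            _ ≤ F0 + ‖drift m V B x - drift m V B 0‖ := norm_add_le _ _
            _ ≤ F0 + L * (‖x‖ + ‖x‖) := by linarith
        have hx0 : 0 ≤ ‖x‖ := norm_nonneg x
        nlinarith
      -- the dominating integrable function
      set G : Ω → ℝ := fun ω =>
        144*h^4*L^2*‖drift m V B x‖^2 + 576*h^4*L^4*(S^2*‖ξ ω‖^2)
          + W*h^2*((1+‖x‖)^(2*k₂)*(S^4*‖ξ ω‖^4) + S^(2*k₂+4)*‖ξ ω‖^(2*k₂+4)) with hGdef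
      -- pointwise a.e. bound
      have haeb : ∀ᵐ ω ∂μ,
          ‖(Y₂ ω + pad m (Matrix.toEuclideanLin Sig (η ω)))
              - x - h • drift m V B x
              - pad m (Matrix.toEuclideanLin Sig (ξ ω + η ω))
              - h • (fderiv ℝ (drift m V B) x)
                  (pad m (Matrix.toEuclideanLin Sig (ξ ω)))‖ ^ 2 ≤ G ω := by
        filter_upwards [heqae] with ω hω
        have hkey := pointwise_key hLip hL0 hh hhL hgc hK₂0 hT x
          (pad m (Matrix.toEuclideanLin Sig (ξ ω))) (Y₂ ω) hω
        have hRrw : (Y₂ ω + pad m (Matrix.toEuclideanLin Sig (η ω)))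
            - x - h • drift m V B x
            - pad m (Matrix.toEuclideanLin Sig (ξ ω + η ω))
            - h • (fderiv ℝ (drift m V B) x) (pad m (Matrix.toEuclideanLin Sig (ξ ω)))
            = Y₂ ω - (x + pad m (Matrix.toEuclideanLin Sig (ξ ω))) - h • drift m V B x
              - h • (fderiv ℝ (drift m V B) x)
                  (pad m (Matrix.toEuclideanLin Sig (ξ ω))) := by
          rw [map_add, pad_add]
          abel
        rw [hRrw]
        have hanorm := haS (ξ ω)
        have hξ0 : (0:ℝ) ≤ S * ‖ξ ω‖ := mul_nonneg hS0 (norm_nonneg _)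
        have hmono : h ^ 2 * (6 * L * ‖drift m V B x‖
              + 12 * L ^ 2 * ‖pad m (Matrix.toEuclideanLin Sig (ξ ω))‖)
            + h * (K₂ * (1 + ‖x‖ + ‖pad m (Matrix.toEuclideanLin Sig (ξ ω))‖) ^ k₂
                * ‖pad m (Matrix.toEuclideanLin Sig (ξ ω))‖ ^ 2)
            ≤ h ^ 2 * (6 * L * ‖drift m V B x‖ + 12 * L ^ 2 * (S * ‖ξ ω‖))
            + h * (K₂ * (1 + ‖x‖ + S * ‖ξ ω‖) ^ k₂ * (S * ‖ξ ω‖) ^ 2) := by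
          gcongr
        have h1 : ‖Y₂ ω - (x + pad m (Matrix.toEuclideanLin Sig (ξ ω)))
              - h • drift m V B x - h • (fderiv ℝ (drift m V B) x)
                (pad m (Matrix.toEuclideanLin Sig (ξ ω)))‖
            ≤ h ^ 2 * (6 * L * ‖drift m V B x‖ + 12 * L ^ 2 * (S * ‖ξ ω‖))
            + h * (K₂ * (1 + ‖x‖ + S * ‖ξ ω‖) ^ k₂ * (S * ‖ξ ω‖) ^ 2) :=
          hkey.trans hmono
        have h2 := pow_le_pow_left₀ (norm_nonneg _) h1 2
        refine h2.trans ?_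
        have h3 := bound_sq (k₂ := k₂) hh.le hL0 (norm_nonneg (drift m V B x)) hK₂0
          (norm_nonneg x) hξ0
        refine h3.trans (le_of_eq ?_)
        rw [hGdef]
        simp only [mul_pow]
        try ring
      -- integrability of the dominating function
      have hi1 : Integrable (fun ω => ‖ξ ω‖^2) μ := by
        have := hm1.1; norm_num at this; exact this
      have hi2 : Integrable (fun ω => ‖ξ ω‖^4) μ := by
        have := hm2.1; norm_num at this; exact this
      have hexp3 : 2*(k₂+1+1) = 2*k₂+4 := by ring
      have hi3 : Integrable (fun ω => ‖ξ ω‖^(2*k₂+4)) μ := by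
        have := hm3.1; rw [hexp3] at this; exact this
      set q0 : ℝ := 144*h^4*L^2*‖drift m V B x‖^2 with hq0def
      set q1 : ℝ := 576*h^4*L^4*S^2 with hq1def
      set q2 : ℝ := W*h^2*(1+‖x‖)^(2*k₂)*S^4 with hq2def
      set q3 : ℝ := W*h^2*S^(2*k₂+4) with hq3def
      have hq10 : 0 ≤ q1 := by rw [hq1def]; positivity
      have hq20 : 0 ≤ q2 := by
        rw [hq2def]
        exact mul_nonneg (mul_nonneg (mul_nonneg hW0 (by positivity)) (by positivity))
          (by positivity)
      have hq30 : 0 ≤ q3 := by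
        rw [hq3def]
        exact mul_nonneg (mul_nonneg hW0 (by positivity)) (pow_nonneg hS0 _)
      have hGeq : G = fun ω => q0 + q1*‖ξ ω‖^2 + q2*‖ξ ω‖^4 + q3*‖ξ ω‖^(2*k₂+4) := by
        funext ω
        rw [hGdef, hq0def, hq1def, hq2def, hq3def]
        ring
      have hGint : Integrable G μ := by
        rw [hGeq]
        exact (((integrable_const q0).add (hi1.const_mul q1)).add
          (hi2.const_mul q2)).add (hi3.const_mul q3)
      -- the main integral bound
      have hIbound : ∫ ω,
          ‖(Y₂ ω + pad m (Matrix.toEuclideanLin Sig (η ω)))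
              - x - h • drift m V B x
              - pad m (Matrix.toEuclideanLin Sig (ξ ω + η ω))
              - h • (fderiv ℝ (drift m V B) x)
                  (pad m (Matrix.toEuclideanLin Sig (ξ ω)))‖ ^ 2 ∂μ ≤ ∫ ω, G ω ∂μ := by
        apply integral_mono_of_nonneg
          (Filter.Eventually.of_forall fun ω => by positivity) hGint haeb
      have hGval : ∫ ω, G ω ∂μ
          = q0 + q1 * (∫ ω, ‖ξ ω‖^2 ∂μ) + q2 * (∫ ω, ‖ξ ω‖^4 ∂μ)
            + q3 * (∫ ω, ‖ξ ω‖^(2*k₂+4) ∂μ) := by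
        rw [hGeq]
        have hint1 : Integrable (fun ω => q1 * ‖ξ ω‖^2) μ := hi1.const_mul q1
        have hint2 : Integrable (fun ω => q2 * ‖ξ ω‖^4) μ := hi2.const_mul q2
        have hint3 : Integrable (fun ω => q3 * ‖ξ ω‖^(2*k₂+4)) μ := hi3.const_mul q3
        have hint12 : Integrable (fun ω => q0 + q1 * ‖ξ ω‖^2) μ :=
          (integrable_const q0).add hint1
        have hint123 : Integrable (fun ω => q0 + q1 * ‖ξ ω‖^2 + q2 * ‖ξ ω‖^4) μ :=
          hint12.add hint2
        rw [integral_add hint123 hint3, integral_add hint12 hint2,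
          integral_add (integrable_const q0) hint1,
          integral_const, integral_const_mul, integral_const_mul, integral_const_mul]
        simp [measure_univ]
      -- moment estimates
      have hT1 : ∫ ω, ‖ξ ω‖^2 ∂μ ≤ D1 * (h/2) := by
        have h1 := hm1.2
        have h2 : 2*(0+1) = 2 := by norm_num
        rw [h2] at h1
        calc ∫ ω, ‖ξ ω‖^2 ∂μ
            ≤ (d:ℝ)^(0+1) * gaussMoment (0+1) * (h/2)^(0+1) := h1
          _ = D1 * (h/2) := by rw [hD1def]; ring
      have hT2 : ∫ ω, ‖ξ ω‖^4 ∂μ ≤ D2 * (h/2)^2 := by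
        have h1 := hm2.2
        have h2 : 2*(1+1) = 4 := by norm_num
        rw [h2] at h1
        calc ∫ ω, ‖ξ ω‖^4 ∂μ
            ≤ (d:ℝ)^(1+1) * gaussMoment (1+1) * (h/2)^(1+1) := h1
          _ = D2 * (h/2)^2 := by rw [hD2def]; try ring
      have hT3 : ∫ ω, ‖ξ ω‖^(2*k₂+4) ∂μ ≤ D3 * (h/2)^(k₂+2) := by
        have h1 := hm3.2
        rw [hexp3] at h1
        calc ∫ ω, ‖ξ ω‖^(2*k₂+4) ∂μ
            ≤ (d:ℝ)^(k₂+1+1) * gaussMoment (k₂+1+1) * (h/2)^(k₂+1+1) := h1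
          _ = D3 * (h/2)^(k₂+2) := by rw [hD3def]; try ring
      -- positivity facts about 1+‖x‖
      have hcp1 : (1:ℝ) ≤ 1 + ‖x‖ := by linarith [norm_nonneg x]
      have hcp0 : (0:ℝ) ≤ 1 + ‖x‖ := by linarith
      have hk1 : 1 ≤ k := le_max_left _ _
      have hk2k : k₂ ≤ k := le_max_right _ _
      have hcpk : (1+‖x‖)^2 ≤ (1+‖x‖)^(2*k) :=
        pow_le_pow_right₀ hcp1 (by omega)
      have hcpk2 : (1+‖x‖)^(2*k₂) ≤ (1+‖x‖)^(2*k) :=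
        pow_le_pow_right₀ hcp1 (by omega)
      have hcp1k : (1:ℝ) ≤ (1+‖x‖)^(2*k) := one_le_pow₀ hcp1
      have hh4 : (0:ℝ) ≤ h^4 := by positivity
      -- term-by-term bounds
      have b1 : q0 ≤ h^4 * X1 * (1+‖x‖)^(2*k) := by
        rw [hq0def, hX1def]
        have h1 : ‖drift m V B x‖^2 ≤ (F0+2*L)^2 * (1+‖x‖)^2 := by
          have := pow_le_pow_left₀ (norm_nonneg _) hFle 2
          rw [mul_pow] at this
          exact this
        have h2 : ‖drift m V B x‖^2 ≤ (F0+2*L)^2 * (1+‖x‖)^(2*k) := by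
          refine h1.trans ?_
          exact mul_le_mul_of_nonneg_left hcpk (by positivity)
        calc 144*h^4*L^2*‖drift m V B x‖^2
            ≤ 144*h^4*L^2*((F0+2*L)^2 * (1+‖x‖)^(2*k)) := by
              exact mul_le_mul_of_nonneg_left h2 (by positivity)
          _ = h^4 * (144*L^2*(F0+2*L)^2) * (1+‖x‖)^(2*k) := by ring
      have b2 : q1 * (∫ ω, ‖ξ ω‖^2 ∂μ) ≤ h^4 * X2 * (1+‖x‖)^(2*k) := by
        have hT10 : q1 * (∫ ω, ‖ξ ω‖^2 ∂μ) ≤ q1 * (D1 * (h/2)) :=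
          mul_le_mul_of_nonneg_left hT1 hq10
        refine hT10.trans ?_
        have h1 : q1 * (D1 * (h/2)) = (576*L^4*S^2*D1)*(h/2)*h^4 := by
          rw [hq1def]; ring
        rw [h1]
        have h2 : (576*L^4*S^2*D1)*(h/2)*h^4 ≤ (576*L^4*S^2*D1)*h₀*h^4 := by
          apply mul_le_mul_of_nonneg_right _ hh4
          exact mul_le_mul_of_nonneg_left hh2h₀ (by positivity)
        refine h2.trans ?_
        have h3 : (576*L^4*S^2*D1)*h₀*h^4 = h^4 * X2 := by rw [hX2def]; ring
        rw [h3]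
        exact le_mul_of_one_le_right (by positivity) hcp1k
      have b3 : q2 * (∫ ω, ‖ξ ω‖^4 ∂μ) ≤ h^4 * X3 * (1+‖x‖)^(2*k) := by
        have hT20 : q2 * (∫ ω, ‖ξ ω‖^4 ∂μ) ≤ q2 * (D2 * (h/2)^2) :=
          mul_le_mul_of_nonneg_left hT2 hq20
        refine hT20.trans ?_
        have h1 : q2 * (D2 * (h/2)^2) = h^4 * (W*S^4*D2/4) * (1+‖x‖)^(2*k₂) := by
          rw [hq2def]; ring
        rw [h1, ← hX3def]
        exact mul_le_mul_of_nonneg_left hcpk2 (by positivity)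
      have b4 : q3 * (∫ ω, ‖ξ ω‖^(2*k₂+4) ∂μ) ≤ h^4 * X4 * (1+‖x‖)^(2*k) := by
        have hT30 : q3 * (∫ ω, ‖ξ ω‖^(2*k₂+4) ∂μ) ≤ q3 * (D3 * (h/2)^(k₂+2)) :=
          mul_le_mul_of_nonneg_left hT3 hq30
        refine hT30.trans ?_
        have hsplit : (h/2:ℝ)^(k₂+2) = (h/2)^k₂ * (h/2)^2 := by rw [← pow_add]
        have hek : (h/2:ℝ)^k₂ ≤ e := by
          rw [hedef]
          apply pow_le_pow_left₀ hs0
          exact le_trans hh2h₀ (le_max_right _ _)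
        have h1 : q3 * (D3 * (h/2)^(k₂+2)) = (W*S^(2*k₂+4)*D3)*((h/2)^k₂)*(h^4/4) := by
          rw [hq3def, hsplit]; ring
        rw [h1]
        have h2 : (W*S^(2*k₂+4)*D3)*((h/2)^k₂)*(h^4/4) ≤ (W*S^(2*k₂+4)*D3)*e*(h^4/4) := by
          apply mul_le_mul_of_nonneg_right _ (by positivity)
          apply mul_le_mul_of_nonneg_left hek
          exact mul_nonneg (mul_nonneg hW0 (pow_nonneg hS0 _)) hD30
        refine h2.trans ?_
        have h3 : (W*S^(2*k₂+4)*D3)*e*(h^4/4) = h^4 * X4 := by rw [hX4def]; ring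
        rw [h3]
        exact le_mul_of_one_le_right
          (mul_nonneg hh4 hX40) hcp1k
      -- final assembly
      have hsum : ∫ ω, G ω ∂μ ≤ (Real.sqrt Q * (1+‖x‖)^k * h^2)^2 := by
        rw [hGval]
        have htot : q0 + q1 * (∫ ω, ‖ξ ω‖^2 ∂μ) + q2 * (∫ ω, ‖ξ ω‖^4 ∂μ)
            + q3 * (∫ ω, ‖ξ ω‖^(2*k₂+4) ∂μ)
            ≤ h^4 * X1 * (1+‖x‖)^(2*k) + h^4 * X2 * (1+‖x‖)^(2*k)
              + h^4 * X3 * (1+‖x‖)^(2*k) + h^4 * X4 * (1+‖x‖)^(2*k) := by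
          linarith
        refine htot.trans (le_of_eq ?_)
        have hsq : (Real.sqrt Q)^2 = Q := Real.sq_sqrt hQ0
        have hpk : ((1+‖x‖)^k)^2 = (1+‖x‖)^(2*k) := by
          rw [← pow_mul, mul_comm]
        calc h^4 * X1 * (1+‖x‖)^(2*k) + h^4 * X2 * (1+‖x‖)^(2*k)
              + h^4 * X3 * (1+‖x‖)^(2*k) + h^4 * X4 * (1+‖x‖)^(2*k)
            = Q * (1+‖x‖)^(2*k) * h^4 := by rw [hQdef]; ring
          _ = (Real.sqrt Q * (1+‖x‖)^k * h^2)^2 := by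
              rw [mul_pow, mul_pow, hsq, hpk]; ring
      show Real.sqrt _ ≤ Real.sqrt Q * (1 + ‖x‖) ^ k * h ^ 2
      have hfin : ∫ ω,
          ‖(Y₂ ω + pad m (Matrix.toEuclideanLin Sig (η ω)))
              - x - h • drift m V B x
              - pad m (Matrix.toEuclideanLin Sig (ξ ω + η ω))
              - h • (fderiv ℝ (drift m V B) x)
                  (pad m (Matrix.toEuclideanLin Sig (ξ ω)))‖ ^ 2 ∂μ
          ≤ (Real.sqrt Q * (1+‖x‖)^k * h^2)^2 := hIbound.trans hsum
      calc Real.sqrt _ ≤ Real.sqrt ((Real.sqrt Q * (1+‖x‖)^k * h^2)^2) :=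
            Real.sqrt_le_sqrt hfin
        _ = Real.sqrt Q * (1+‖x‖)^k * h^2 := Real.sqrt_sq (by positivity)
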